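/- Characterization of the dual feasible region. For every μ ∈ ℝ^P, the conjugate value r*(−μ) is finite if and only if for every subset S ⊆ P one has ∑_{p∈S} γ_p μ_p ≥ −λ. -/
import Mathlib


open Finset

/-- Characterization of the dual feasible region: `r*(-μ)` is finite (the defining
set is bounded above; it is always nonempty, e.g. take `e = γ`) if and only if
`∑_{p∈S} γ_p μ_p ≥ -λ` for every subset `S ⊆ P`. -/
theorem dual_feasible_region_characterization
    {P : Type*} [Fintype P] [Nonempty P]
    (lam : ℝ) (hlam : 0 < lam)
    (γ : P → ℝ) (hγ : ∀ p, 0 < γ p)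
    (μ : P → ℝ) :
    BddAbove {w : ℝ | ∃ e : P → ℝ, (∀ p, e p ≤ γ p) ∧
      w = (Finset.univ.inf' Finset.univ_nonempty fun p => e p / γ p)
        + (∑ p, μ p * e p) / lam}
    ↔ ∀ S : Finset P, -lam ≤ ∑ p ∈ S, γ p * μ p := by
  classical
  constructor
  · rintro ⟨B, hB⟩ S
    by_contra hlt
    push_neg at hlt
    have hSne : S.Nonempty := by
      rcases S.eq_empty_or_nonempty with rfl | h
      · simp at hlt; linarith
      · exact h
    set cS : ℝ := ∑ p ∈ S, γ p * μ p with hcS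
    set cT : ℝ := ∑ p ∈ Sᶜ, γ p * μ p with hcT
    have ha : 1 + cS / lam < 0 := by
      have : cS / lam < -1 := by rw [div_lt_iff₀ hlam]; linarith
      linarith
    set a : ℝ := 1 + cS / lam with haa
    set t : ℝ := min 1 ((B + 1 - cT / lam) / a) with ht
    have ht1 : t ≤ 1 := min_le_left _ _
    set e : P → ℝ := fun p => if p ∈ S then t * γ p else γ p with he
    have hele : ∀ p, e p ≤ γ p := by
      intro p
      simp only [he]
      split_ifs with hp
      · nlinarith [hγ p]
      · exact le_rfl
    have hinf : (Finset.univ.inf' Finset.univ_nonempty fun p => e p / γ p) = t := by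
      apply le_antisymm
      · obtain ⟨q, hq⟩ := hSne
        have : e q / γ q = t := by
          simp only [he, if_pos hq]
          rw [mul_div_assoc, div_self (hγ q).ne', mul_one]
        calc (Finset.univ.inf' Finset.univ_nonempty fun p => e p / γ p) ≤ e q / γ q :=
              Finset.inf'_le _ (mem_univ q)
          _ = t := this
      · apply Finset.le_inf'
        intro p _
        simp only [he]
        split_ifs with hp
        · rw [mul_div_assoc, div_self (hγ p).ne']; simp
        · rw [div_self (hγ p).ne']; exact ht1
    have hsum : ∑ p, μ p * e p = t * cS + cT := by
      rw [← Finset.sum_add_sum_compl S]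
      congr 1
      · rw [hcS, Finset.mul_sum]
        apply Finset.sum_congr rfl
        intro p hp
        simp only [he, if_pos hp]; ring
      · apply Finset.sum_congr rfl
        intro p hp
        simp only [Finset.mem_compl] at hp
        simp only [he, if_neg hp]; ring
    have hw : t + (t * cS + cT) / lam ≤ B := by
      apply hB
      exact ⟨e, hele, by rw [hinf, hsum]⟩
    have hta : (B + 1 - cT / lam) ≤ t * a := by
      have h1 : t ≤ (B + 1 - cT / lam) / a := min_le_right _ _
      have := mul_le_mul_of_nonpos_right h1 (le_of_lt ha)
      rwa [div_mul_cancel₀ _ (ne_of_lt ha)] at this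
    have hexp : t + (t * cS + cT) / lam = t * a + cT / lam := by
      rw [haa]; field_simp; ring
    rw [hexp] at hw
    linarith
  · intro h
    set c : P → ℝ := fun p => γ p * μ p with hc
    set Neg : Finset P := Finset.univ.filter (fun p => c p < 0) with hNeg
    set N : ℝ := ∑ p ∈ Neg, c p with hNdef
    set Cp : ℝ := ∑ p ∈ Negᶜ, c p with hCp
    have hN : -lam ≤ N := h Neg
    refine ⟨(1 + N / lam) + Cp / lam, ?_⟩
    rintro w ⟨e, he, rfl⟩
    set m := Finset.univ.inf' Finset.univ_nonempty (fun p => e p / γ p) with hm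
    have hmle : ∀ p, m ≤ e p / γ p := fun p => Finset.inf'_le _ (mem_univ p)
    have hm1 : m ≤ 1 := by
      obtain ⟨p⟩ := ‹Nonempty P›
      calc m ≤ e p / γ p := hmle p
        _ ≤ 1 := by rw [div_le_one (hγ p)]; exact he p
    have hrepr : ∀ p, μ p * e p = c p * (e p / γ p) := by
      intro p
      simp only [hc]
      rw [mul_comm (γ p) (μ p), mul_assoc, mul_div_cancel₀ _ (hγ p).ne']
    have key : ∑ p, μ p * e p ≤ Cp + m * N := by
      rw [← Finset.sum_add_sum_compl Neg]
      have h1 : ∑ p ∈ Neg, μ p * e p ≤ m * N := by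
        rw [hNdef, Finset.mul_sum]
        apply Finset.sum_le_sum
        intro p hp
        have hcp : c p < 0 := by
          simp only [hNeg, Finset.mem_filter] at hp
          exact hp.2
        rw [hrepr p, mul_comm m (c p)]
        exact mul_le_mul_of_nonpos_left (hmle p) (le_of_lt hcp)
      have h2 : ∑ p ∈ Negᶜ, μ p * e p ≤ Cp := by
        rw [hCp]
        apply Finset.sum_le_sum
        intro p hp
        have hcp : 0 ≤ c p := by
          simp only [hNeg, Finset.mem_compl, Finset.mem_filter] at hp
          push_neg at hp
          exact hp (mem_univ p)
        rw [hrepr p]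
        calc c p * (e p / γ p) ≤ c p * 1 := by
              apply mul_le_mul_of_nonneg_left _ hcp
              rw [div_le_one (hγ p)]; exact he p
          _ = c p := mul_one _
      linarith
    have hNlam : -1 ≤ N / lam := by
      rw [le_div_iff₀ hlam]; linarith
    have hμe : (∑ p, μ p * e p) / lam ≤ (Cp + m * N) / lam := by
      exact div_le_div_of_nonneg_right key hlam.le
    have hsplit : (Cp + m * N) / lam = Cp / lam + m * (N / lam) := by
      field_simp
    have hfin : m + m * (N / lam) ≤ 1 + N / lam := by
      nlinarith [mul_nonneg (by linarith : (0:ℝ) ≤ 1 - m) (by linarith : (0:ℝ) ≤ 1 + N / lam)]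
    calc m + (∑ p, μ p * e p) / lam ≤ m + (Cp + m * N) / lam := by linarith
      _ = (m + m * (N / lam)) + Cp / lam := by rw [hsplit]; ring
      _ ≤ (1 + N / lam) + Cp / lam := by linarith
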